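/- Define elements E_0, E_1, …, E_N of f recursively by E_0 = θ_j and, for 1 ≤ m ≤ N, E_m = θ_j θ_i^{(m)} − Σ_{k=0}^{m−1} v^{(k−N)(m−k)} θ_i^{(m−k)} E_k. Then for every integer m with 0 ≤ m ≤ N one has E_m = Σ_{p=0}^{m} (−1)^p v^{−p(1+N−m)} θ_i^{(p)} θ_j θ_i^{(m−p)} = f(i,j;m). -/

import Mathlib

noncomputable section

open Finset

/-- The base field `K = ℚ(v)`. -/
abbrev K : Type := RatFunc ℚ

/-- The variable `v`. -/
def v : K := RatFunc.X

/-- The balanced quantum integer `[n]_v = (v^n - v^{-n})/(v - v^{-1})`. -/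
def qnum (n : ℕ) : K := (v ^ (n : ℤ) - v ^ (-(n : ℤ))) / (v - v⁻¹)

/-- The quantum factorial `[n]_v!`. -/
def qfac : ℕ → K
  | 0 => 1
  | n + 1 => qfac n * qnum (n + 1)

/-- Divided power `x^{(n)} = x^n/[n]_v!` in the free algebra. -/
def fdp (x : FreeAlgebra K (Fin 2)) (n : ℕ) : FreeAlgebra K (Fin 2) :=
  (qfac n)⁻¹ • x ^ n

/-- The generator `θ_i` in the free algebra. -/
def θi' : FreeAlgebra K (Fin 2) := FreeAlgebra.ι K 0

/-- The generator `θ_j` in the free algebra. -/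
def θj' : FreeAlgebra K (Fin 2) := FreeAlgebra.ι K 1

/-- The two quantum Serre relations defining Lusztig's algebra `f` for the quiver with
two vertices `i, j` and `N` arrows from `j` to `i` (so `a_{ij} = a_{ji} = -N`). -/
inductive SerreRel (N : ℕ) : FreeAlgebra K (Fin 2) → FreeAlgebra K (Fin 2) → Prop
  | serre_i : SerreRel N
      (∑ k ∈ range (N + 2), ((-1 : K) ^ k) • (fdp θi' k * θj' * fdp θi' (N + 1 - k))) 0
  | serre_j : SerreRel N
      (∑ k ∈ range (N + 2), ((-1 : K) ^ k) • (fdp θj' k * θi' * fdp θj' (N + 1 - k))) 0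

/-- Lusztig's algebra `f`. -/
def LusztigF (N : ℕ) : Type := RingQuot (SerreRel N)

instance (N : ℕ) : Ring (LusztigF N) := inferInstanceAs (Ring (RingQuot (SerreRel N)))
instance (N : ℕ) : Algebra K (LusztigF N) := inferInstanceAs (Algebra K (RingQuot (SerreRel N)))

/-- The generator `θ_i` of `f`. -/
def θi (N : ℕ) : LusztigF N := RingQuot.mkAlgHom K (SerreRel N) θi'

/-- The generator `θ_j` of `f`. -/
def θj (N : ℕ) : LusztigF N := RingQuot.mkAlgHom K (SerreRel N) θj'

/-- Divided power `x^{(n)} = x^n/[n]_v!` in `f`. -/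
def dp {N : ℕ} (x : LusztigF N) (n : ℕ) : LusztigF N := (qfac n)⁻¹ • x ^ n

/-- The element `f(i,j;m) = Σ_{r+s=m} (-1)^r v^{-r(N-m+1)} θ_i^{(r)} θ_j θ_i^{(s)}`. -/
def fm (N m : ℕ) : LusztigF N :=
  ∑ r ∈ range (m + 1),
    ((-1 : K) ^ r * v ^ (-(r : ℤ) * ((N : ℤ) - (m : ℤ) + 1))) •
      (dp (θi N) r * θj N * dp (θi N) (m - r))


lemma v_ne_zero : v ≠ 0 := RatFunc.X_ne_zero

lemma v_pow_ne_one {k : ℕ} (hk : 1 ≤ k) : v ^ k ≠ 1 := by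
  intro h
  have h2 : (Polynomial.X : Polynomial ℚ) ^ k = 1 := by
    apply RatFunc.algebraMap_injective ℚ
    rw [map_pow, map_one]
    simpa [v, RatFunc.algebraMap_X] using h
  have := congrArg Polynomial.natDegree h2
  simp [Polynomial.natDegree_X_pow] at this
  omega

lemma v_natpow_ne_one {k : ℤ} (hk : 0 < k) : v ^ k ≠ 1 := by
  intro he
  lift k to ℕ using hk.le with n
  rw [zpow_natCast] at he
  exact v_pow_ne_one (by exact_mod_cast hk) he

lemma v_zpow_ne_one {k : ℤ} (hk : k ≠ 0) : v ^ k ≠ 1 := by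
  rcases hk.lt_or_gt with h | h
  · intro he
    have : v ^ (-k) = 1 := by rw [zpow_neg, he, inv_one]
    exact v_natpow_ne_one (by omega) this
  · exact v_natpow_ne_one h

lemma v_zpow_injective : Function.Injective (fun k : ℤ => v ^ k) := by
  intro a b hab
  by_contra hne
  apply v_zpow_ne_one (sub_ne_zero.mpr hne)
  rw [zpow_sub₀ v_ne_zero]
  simp only at hab
  rw [hab, div_self (zpow_ne_zero _ v_ne_zero)]


lemma v_sub_vinv_ne_zero : v - v⁻¹ ≠ 0 := by
  intro h
  have h2 : v ^ (1:ℤ) = v ^ (-1:ℤ) := by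
    rw [sub_eq_zero] at h
    simpa [zpow_neg] using h
  exact (by omega : (1:ℤ) ≠ -1) (v_zpow_injective h2)

lemma qnum_ne_zero {n : ℕ} (hn : 1 ≤ n) : qnum n ≠ 0 := by
  apply div_ne_zero _ v_sub_vinv_ne_zero
  rw [sub_ne_zero]
  intro h
  have := v_zpow_injective h
  omega

lemma qfac_ne_zero (n : ℕ) : qfac n ≠ 0 := by
  induction n with
  | zero => simp [qfac]
  | succ n ih => exact mul_ne_zero ih (qnum_ne_zero (by omega))

lemma qnum_add (a b : ℕ) : qnum (a + b) = v ^ (a:ℤ) * qnum b + v ^ (-(b:ℤ)) * qnum a := by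
  unfold qnum
  rw [mul_div_assoc', mul_div_assoc', ← add_div]
  congr 1
  have hv := v_ne_zero
  push_cast
  rw [mul_sub, mul_sub, ← zpow_add₀ hv, ← zpow_add₀ hv, ← zpow_add₀ hv, ← zpow_add₀ hv]
  ring_nf

def qbin (a b : ℕ) : K := qfac (a + b) / (qfac a * qfac b)

lemma qbin_comm (a b : ℕ) : qbin a b = qbin b a := by
  unfold qbin; rw [add_comm, mul_comm]

lemma qbin_zero_left (b : ℕ) : qbin 0 b = 1 := by
  unfold qbin
  simp [qfac]
  exact qfac_ne_zero b

lemma qbin_zero_right (a : ℕ) : qbin a 0 = 1 := by rw [qbin_comm, qbin_zero_left]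

lemma qfac_succ (n : ℕ) : qfac (n+1) = qfac n * qnum (n+1) := rfl

lemma qbin_pascal (a b : ℕ) : qbin (a+1) (b+1) =
    v ^ ((b:ℤ)+1) * qbin a (b+1) + v ^ (-((a:ℤ)+1)) * qbin (a+1) b := by
  unfold qbin
  have h1 : a + 1 + (b + 1) = (a + (b + 1)) + 1 := by ring
  rw [h1, qfac_succ, show a + (b+1) + 1 = (b+1) + (a+1) by ring, qnum_add (b+1) (a+1)]
  rw [qfac_succ a, qfac_succ b]
  have ha := qfac_ne_zero a
  have hb := qfac_ne_zero b
  have ha1 := qnum_ne_zero (n := a+1) (by omega)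
  have hb1 := qnum_ne_zero (n := b+1) (by omega)
  rw [show a + (b + 1) = a + b + 1 from by ring, show a + 1 + b = a + b + 1 from by ring]
  push_cast
  field_simp

open Finset

def Sq (p : ℕ) : K := ∑ r ∈ range (p+1), (-1:K)^r * v ^ ((r:ℤ) * ((p:ℤ) - 1)) * qbin r (p - r)

lemma Sq_succ (p : ℕ) : Sq (p+1) = (1 - v ^ (2*(p:ℤ))) * Sq p := by
  have hv := v_ne_zero
  unfold Sq
  rw [Finset.sum_range_succ, Finset.sum_range_succ']
  have hstep : ∀ i ∈ range p,
      (-1:K)^(i+1) * v ^ (((i+1:ℕ):ℤ) * (((p+1:ℕ):ℤ) - 1)) * qbin (i+1) (p+1-(i+1))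
      = (-(v ^ (2*(p:ℤ)))) * ((-1:K)^i * v ^ ((i:ℤ) * ((p:ℤ) - 1)) * qbin i (p - i))
        + (-1:K)^(i+1) * v ^ (((i+1:ℕ):ℤ) * ((p:ℤ) - 1)) * qbin (i+1) (p - (i+1)) := by
    intro i hi
    rw [Finset.mem_range] at hi
    have e1 : p + 1 - (i+1) = (p - 1 - i) + 1 := by omega
    have e2 : p - i = (p-1-i) + 1 := by omega
    have e3 : p - (i+1) = p - 1 - i := by omega
    have c1 : ((p-1-i:ℕ):ℤ) = (p:ℤ) - 1 - (i:ℤ) := by omega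
    rw [e1, qbin_pascal, e2, e3, c1]
    push_cast
    rw [mul_add]
    congr 1
    · rw [pow_succ, mul_assoc ((-1:K)^i * -1)]
      have h : v ^ (((i:ℤ) + 1) * ((p:ℤ) + 1 - 1)) * (v ^ ((p:ℤ) - 1 - (i:ℤ) + 1) * qbin i (p-1-i+1))
          = v ^ (2*(p:ℤ)) * (v ^ ((i:ℤ)*((p:ℤ)-1)) * qbin i (p-1-i+1)) := by
        rw [← mul_assoc, ← mul_assoc, ← zpow_add₀ hv, ← zpow_add₀ hv,
          show ((i:ℤ) + 1) * ((p:ℤ) + 1 - 1) + ((p:ℤ) - 1 - (i:ℤ) + 1)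
            = 2*(p:ℤ) + ((i:ℤ)*((p:ℤ)-1)) from by ring]
      rw [h]; ring
    · rw [mul_assoc]
      have h : v ^ (((i:ℤ) + 1) * ((p:ℤ) + 1 - 1)) * (v ^ (-((i:ℤ) + 1)) * qbin (i+1) (p-1-i))
          = v ^ (((i:ℤ)+1)*((p:ℤ)-1)) * qbin (i+1) (p-1-i) := by
        rw [← mul_assoc, ← zpow_add₀ hv,
          show ((i:ℤ) + 1) * ((p:ℤ) + 1 - 1) + (-((i:ℤ) + 1)) = ((i:ℤ)+1)*((p:ℤ)-1) from by ring]
      rw [h, mul_assoc]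
  have h1 := Finset.sum_range_succ (fun r => (-1:K)^r * v ^ ((r:ℤ) * ((p:ℤ) - 1)) * qbin r (p - r)) p
  have h2 := Finset.sum_range_succ' (fun r => (-1:K)^r * v ^ ((r:ℤ) * ((p:ℤ) - 1)) * qbin r (p - r)) p
  rw [Finset.sum_congr rfl hstep, Finset.sum_add_distrib, ← Finset.mul_sum, h2]
  simp only [Nat.sub_self, qbin_zero_right, qbin_zero_left, Nat.sub_zero, Nat.cast_zero,
    zero_mul, zpow_zero, pow_zero, one_mul, mul_one, Nat.add_sub_cancel] at h1 h2 ⊢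
  push_cast at h1 h2 ⊢
  have h3 : v ^ (2*(p:ℤ)) * v ^ ((p:ℤ) * ((p:ℤ) - 1)) = v ^ (((p:ℤ)+1) * ((p:ℤ)+1-1)) := by
    rw [← zpow_add₀ hv]; congr 1; ring
  linear_combination (v ^ (2*(p:ℤ))) * (h1 - h2) + ((-1:K)^p) * h3

lemma Sq_eq_zero {p : ℕ} (hp : 1 ≤ p) : Sq p = 0 := by
  induction p with
  | zero => omega
  | succ n ih =>
    rw [Sq_succ]
    rcases Nat.eq_zero_or_pos n with h|h
    · subst h; norm_num
    · rw [ih h, mul_zero]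

lemma Sq_zero : Sq 0 = 1 := by
  simp [Sq, qbin_zero_left]


lemma dp_zero {N : ℕ} (x : LusztigF N) : dp x 0 = 1 := by
  simp [dp, qfac]

lemma dp_mul {N : ℕ} (x : LusztigF N) (a b : ℕ) :
    dp x a * dp x b = qbin a b • dp x (a + b) := by
  unfold dp qbin
  rw [smul_mul_smul, pow_add, smul_smul]
  congr 1
  field_simp [qfac_ne_zero]

def Ff (N m : ℕ) : LusztigF N :=
  ∑ p ∈ range (m + 1),
    ((-1 : K) ^ p * v ^ (-(p : ℤ) * (1 + (N : ℤ) - (m : ℤ)))) •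
      (dp (θi N) p * θj N * dp (θi N) (m - p))

lemma key (N m : ℕ) :
    ∑ k ∈ range (m+1),
      v ^ (((k : ℤ) - (N : ℤ)) * ((m : ℤ) - (k : ℤ))) • (dp (θi N) (m - k) * Ff N k)
    = θj N * dp (θi N) m := by
  have hv := v_ne_zero
  have step1 : ∑ k ∈ range (m+1),
      v ^ (((k : ℤ) - (N : ℤ)) * ((m : ℤ) - (k : ℤ))) • (dp (θi N) (m - k) * Ff N k)
      = ∑ k ∈ range (m+1), ∑ p ∈ range (k+1),
        (v ^ (((k : ℤ) - (N : ℤ)) * ((m : ℤ) - (k : ℤ))) *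
          ((-1 : K) ^ p * v ^ (-(p : ℤ) * (1 + (N : ℤ) - (k : ℤ)))) * qbin (m - k) p) •
          (dp (θi N) (m - k + p) * θj N * dp (θi N) (k - p)) := by
    refine Finset.sum_congr rfl fun k hk => ?_
    unfold Ff
    rw [Finset.mul_sum, Finset.smul_sum]
    refine Finset.sum_congr rfl fun p hp => ?_
    rw [mul_smul_comm, smul_smul, ← mul_assoc, ← mul_assoc,
      ← mul_assoc (dp (θi N) (m-k)) (dp (θi N) p), dp_mul,
      smul_mul_assoc, smul_mul_assoc, smul_smul, mul_assoc (v ^ _)]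
  rw [step1, Finset.sum_sigma']
  have step2 : ∑ q ∈ (range (m+1)).sigma (fun k => range (k+1)),
      (v ^ (((q.1 : ℤ) - (N : ℤ)) * ((m : ℤ) - (q.1 : ℤ))) *
        ((-1 : K) ^ q.2 * v ^ (-(q.2 : ℤ) * (1 + (N : ℤ) - (q.1 : ℤ)))) * qbin (m - q.1) q.2) •
        (dp (θi N) (m - q.1 + q.2) * θj N * dp (θi N) (q.1 - q.2))
      = ∑ q ∈ (range (m+1)).sigma (fun P => range (P+1)),
      ((-1 : K) ^ q.2 * v ^ (((m:ℤ) - (q.1:ℤ) - (N:ℤ)) * (q.1:ℤ) + (q.2:ℤ) * ((q.1:ℤ) - 1))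
        * qbin (q.1 - q.2) q.2) •
        (dp (θi N) q.1 * θj N * dp (θi N) (m - q.1)) := by
    refine Finset.sum_nbij' (fun a => ⟨m - a.1 + a.2, a.2⟩) (fun a => ⟨m - a.1 + a.2, a.2⟩)
      ?_ ?_ ?_ ?_ ?_
    · rintro ⟨k, p⟩ ha
      simp only [Finset.mem_sigma, Finset.mem_range] at ha ⊢
      omega
    · rintro ⟨P, p⟩ ha
      simp only [Finset.mem_sigma, Finset.mem_range] at ha ⊢
      omega
    · rintro ⟨k, p⟩ ha
      simp only [Finset.mem_sigma, Finset.mem_range] at ha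
      have h : m - (m - k + p) + p = k := by omega
      simp [h]
    · rintro ⟨P, p⟩ ha
      simp only [Finset.mem_sigma, Finset.mem_range] at ha
      have h : m - (m - P + p) + p = P := by omega
      simp [h]
    · rintro ⟨k, p⟩ ha
      simp only [Finset.mem_sigma, Finset.mem_range] at ha
      obtain ⟨hk, hp⟩ := ha
      simp only
      have e1 : m - (m - k + p) = k - p := by omega
      have e2 : m - k + p - p = m - k := by omega
      rw [e1, e2]
      congr 1
      have c : ((m - k + p : ℕ) : ℤ) = (m:ℤ) - (k:ℤ) + (p:ℤ) := by omega
      rw [c]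
      congr 1
      have hE : (((k:ℤ) - (N:ℤ)) * ((m:ℤ) - (k:ℤ))) + (-(p:ℤ) * (1 + (N:ℤ) - (k:ℤ)))
          = ((m:ℤ) - ((m:ℤ) - (k:ℤ) + (p:ℤ)) - (N:ℤ)) * ((m:ℤ) - (k:ℤ) + (p:ℤ))
            + (p:ℤ) * (((m:ℤ) - (k:ℤ) + (p:ℤ)) - 1) := by ring
      rw [← hE, zpow_add₀ hv]
      ring
  rw [step2, Finset.sum_sigma]
  dsimp only
  have step3 : ∀ P ∈ range (m+1),
      ∑ p ∈ range (P+1), ((-1 : K) ^ p * v ^ (((m:ℤ) - (P:ℤ) - (N:ℤ)) * (P:ℤ) + (p:ℤ) * ((P:ℤ) - 1))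
        * qbin (P - p) p) •
        (dp (θi N) P * θj N * dp (θi N) (m - P))
      = (v ^ (((m:ℤ) - (P:ℤ) - (N:ℤ)) * (P:ℤ)) * Sq P) • (dp (θi N) P * θj N * dp (θi N) (m - P)) := by
    intro P _
    rw [← Finset.sum_smul]
    congr 1
    rw [Sq, Finset.mul_sum]
    refine Finset.sum_congr rfl fun p hp => ?_
    rw [zpow_add₀ hv, qbin_comm]
    ring
  rw [Finset.sum_congr rfl step3]
  rw [Finset.sum_eq_single_of_mem 0 (by simp)]
  · simp [Sq_zero, dp_zero]
  · intro b _ hb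
    rw [Sq_eq_zero (by omega), mul_zero, zero_smul]


/-- Define `E_0, …, E_N` recursively by `E_0 = θ_j` and, for `1 ≤ m ≤ N`,
`E_m = θ_j θ_i^{(m)} - Σ_{k=0}^{m-1} v^{(k-N)(m-k)} θ_i^{(m-k)} E_k`.
Then for every `0 ≤ m ≤ N`,
`E_m = Σ_{p=0}^{m} (-1)^p v^{-p(1+N-m)} θ_i^{(p)} θ_j θ_i^{(m-p)} = f(i,j;m)`. -/
theorem stmt1 (N : ℕ) (E : ℕ → LusztigF N)
    (h0 : E 0 = θj N)
    (hrec : ∀ m : ℕ, 1 ≤ m → m ≤ N →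
      E m = θj N * dp (θi N) m -
        ∑ k ∈ range m,
          v ^ (((k : ℤ) - (N : ℤ)) * ((m : ℤ) - (k : ℤ))) • (dp (θi N) (m - k) * E k))
    (m : ℕ) (hm : m ≤ N) :
    E m =
      ∑ p ∈ range (m + 1),
        ((-1 : K) ^ p * v ^ (-(p : ℤ) * (1 + (N : ℤ) - (m : ℤ)))) •
          (dp (θi N) p * θj N * dp (θi N) (m - p)) ∧
    E m = fm N m := by
  have aux : ∀ m, m ≤ N → E m = Ff N m := by
    intro m
    induction m using Nat.strong_induction_on with
    | _ m ih =>
      intro hm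
      rcases Nat.eq_zero_or_pos m with h | h
      · subst h
        rw [h0]
        simp [Ff, dp_zero]
      · rw [hrec m h hm]
        have hk := key N m
        rw [Finset.sum_range_succ] at hk
        have hsum : ∑ k ∈ range m, v ^ (((k:ℤ)-(N:ℤ))*((m:ℤ)-(k:ℤ))) • (dp (θi N) (m-k) * E k)
            = ∑ k ∈ range m, v ^ (((k:ℤ)-(N:ℤ))*((m:ℤ)-(k:ℤ))) • (dp (θi N) (m-k) * Ff N k) := by
          refine Finset.sum_congr rfl fun k hk' => ?_
          rw [Finset.mem_range] at hk'
          rw [ih k hk' (by omega)]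
        rw [hsum]
        have hlast : v ^ (((m:ℤ)-(N:ℤ))*((m:ℤ)-(m:ℤ))) • (dp (θi N) (m-m) * Ff N m) = Ff N m := by
          simp [Nat.sub_self, dp_zero]
        rw [hlast] at hk
        rw [← hk, add_sub_cancel_left]
  constructor
  · exact aux m hm
  · rw [aux m hm]
    unfold Ff fm
    refine Finset.sum_congr rfl fun p _ => ?_
    have he : -(p:ℤ) * ((N:ℤ) - (m:ℤ) + 1) = -(p:ℤ) * (1 + (N:ℤ) - (m:ℤ)) := by ring
    rw [he]
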